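/- Let (Ω, ℱ, P) be a probability space, let xₙ : Ω → ℝ^p be measurable random vectors and x₀ ∈ ℝ^p, let yₙ : Ω → ℝ be random variables and y₀ ∈ ℝ. Let cₙ, dₙ be positive reals with cₙ/dₙ → 0 and dₙ → ∞. Assume: (i) cₙ(xₙ − x₀) converges in distribution to a centered Gaussian random vector with covariance matrix Σ₁; (ii) dₙ(yₙ − y₀) converges in distribution to a centered normal random variable with variance σ₂²; (iii) there exists ε > 0 such that |yₙ(ω)| ≥ ε almost surely for every n, and |y₀| ≥ ε. Then cₙ(xₙ·yₙ − x₀·y₀) − cₙ(xₙ − x₀)·y₀ converges to 0 in probability; that is, cₙ(xₙ·yₙ − x₀·y₀) = cₙ(xₙ − x₀)·y₀ + o_P(1). -/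

import Mathlib

open MeasureTheory Filter Matrix ProbabilityTheory
open scoped Topology

private lemma tail_bound {Ω E : Type*} [MeasurableSpace Ω] [NormedAddCommGroup E]
    [MeasurableSpace E] [OpensMeasurableSpace E]
    (P : Measure Ω) [IsProbabilityMeasure P] (F : ℕ → Ω → E) (hFm : ∀ n, Measurable (F n))
    (μ : Measure E) [IsProbabilityMeasure μ]
    (hconv : ∀ f : BoundedContinuousFunction E ℝ,
      Tendsto (fun n => ∫ ω, f (F n ω) ∂P) atTop (𝓝 (∫ z, f z ∂μ)))
    (η : ℝ) (hη : 0 < η) :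
    ∃ M : ℝ, 0 < M ∧ ∀ᶠ n in atTop, P {ω | M ≤ ‖F n ω‖} ≤ ENNReal.ofReal η := by
  -- find K with μ {z | K ≤ ‖z‖} small
  have hmeas : ∀ K : ℝ, MeasurableSet {z : E | K ≤ ‖z‖} :=
    fun K => measurableSet_le measurable_const measurable_norm
  have htend : Tendsto (fun k : ℕ => μ {z : E | (k : ℝ) ≤ ‖z‖}) atTop
      (𝓝 (μ (⋂ k : ℕ, {z : E | (k : ℝ) ≤ ‖z‖}))) := by
    refine tendsto_measure_iInter_atTop (fun k => (hmeas _).nullMeasurableSet) ?_ ⟨0, measure_ne_top _ _⟩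
    intro i j hij z hz
    simp only [Set.mem_setOf_eq] at *
    exact le_trans (by exact_mod_cast Nat.cast_le.mpr hij) hz
  have hempty : (⋂ k : ℕ, {z : E | (k : ℝ) ≤ ‖z‖}) = ∅ := by
    ext z
    simp only [Set.mem_iInter, Set.mem_setOf_eq, Set.mem_empty_iff_false, iff_false, not_forall,
      not_le]
    obtain ⟨k, hk⟩ := exists_nat_gt ‖z‖
    exact ⟨k, hk⟩
  rw [hempty, measure_empty] at htend
  have hK : ∃ K : ℕ, μ {z : E | (K : ℝ) ≤ ‖z‖} ≤ ENNReal.ofReal (η / 4) := by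
    have := (ENNReal.tendsto_nhds_zero.mp htend) (ENNReal.ofReal (η / 4))
      (by simp [ENNReal.ofReal_pos]; linarith)
    exact this.exists
  obtain ⟨K, hKμ⟩ := hK
  -- the cutoff function
  set g : E → ℝ := fun z => min 1 (max (‖z‖ - K) 0) with hg
  have hg0 : ∀ z, 0 ≤ g z := fun z => le_min (by norm_num) (le_max_right _ _)
  have hg1 : ∀ z, g z ≤ 1 := fun z => min_le_left _ _
  have hgcont : Continuous g :=
    continuous_const.min ((continuous_norm.sub continuous_const).max continuous_const)
  let f : BoundedContinuousFunction E ℝ :=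
    ⟨⟨g, hgcont⟩, 2, fun u v => by
      rw [Real.dist_eq, abs_le]
      constructor <;> simp only [ContinuousMap.coe_mk] <;>
        [linarith [hg0 u, hg1 v]; linarith [hg1 u, hg0 v]]⟩
  have hfint : ∀ n, Integrable (fun ω => g (F n ω)) P := by
    intro n
    refine Integrable.mono' (integrable_const 1) ((hgcont.measurable.comp (hFm n)).aestronglyMeasurable) ?_
    refine Eventually.of_forall fun ω => ?_
    rw [Real.norm_eq_abs, abs_le]
    exact ⟨by linarith [hg0 (F n ω)], hg1 _⟩
  -- ∫ g dμ ≤ η/4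
  have hμint : ∫ z, g z ∂μ ≤ η / 4 := by
    have h1 : ∫ z, g z ∂μ ≤ ∫ z, ({z : E | (K : ℝ) ≤ ‖z‖}).indicator (fun _ => (1:ℝ)) z ∂μ := by
      refine integral_mono ?_ ?_ ?_
      · refine Integrable.mono' (integrable_const 1) (hgcont.measurable.aestronglyMeasurable) ?_
        refine Eventually.of_forall fun z => ?_
        rw [Real.norm_eq_abs, abs_le]
        exact ⟨by linarith [hg0 z], hg1 _⟩
      · exact (integrable_const 1).indicator (hmeas _)
      · intro z
        by_cases hz : (K : ℝ) ≤ ‖z‖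
        · simp [Set.indicator_of_mem, hz, hg1 z]
        · have : g z = 0 := by
            simp only [hg]
            push_neg at hz
            rw [max_eq_right (by linarith), min_eq_right (by norm_num)]
          simp [Set.indicator_of_notMem, hz, this]
    have h2 : ∫ z, ({z : E | (K : ℝ) ≤ ‖z‖}).indicator (fun _ => (1:ℝ)) z ∂μ
        = (μ {z : E | (K : ℝ) ≤ ‖z‖}).toReal := by
      rw [integral_indicator (hmeas _)]
      simp
      rfl
    rw [h2] at h1
    refine le_trans h1 (ENNReal.toReal_le_of_le_ofReal (by linarith) hKμ)
  -- eventually ∫ g (F n) dP ≤ η/2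
  have hev : ∀ᶠ n in atTop, ∫ ω, g (F n ω) ∂P < η / 2 := by
    have := hconv f
    have hlt : ∫ z, f z ∂μ < η / 2 := lt_of_le_of_lt hμint (by linarith)
    exact this.eventually_lt_const hlt
  refine ⟨K + 1, by positivity, ?_⟩
  filter_upwards [hev] with n hn
  have hsub : (P {ω | (K : ℝ) + 1 ≤ ‖F n ω‖}).toReal ≤ ∫ ω, g (F n ω) ∂P := by
    have h1 : ∫ ω, ({ω | (K : ℝ) + 1 ≤ ‖F n ω‖}).indicator (fun _ => (1:ℝ)) ω ∂P
        ≤ ∫ ω, g (F n ω) ∂P := by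
      refine integral_mono ?_ (hfint n) ?_
      · exact (integrable_const 1).indicator (measurableSet_le measurable_const (hFm n).norm)
      · intro ω
        by_cases hω : (K : ℝ) + 1 ≤ ‖F n ω‖
        · have : g (F n ω) = 1 := by
            simp only [hg]
            rw [max_eq_left (by linarith), min_eq_left (by linarith)]
          simp [Set.indicator_of_mem, hω, this]
        · simp [Set.indicator_of_notMem, hω, hg0 (F n ω)]
    rwa [integral_indicator (measurableSet_le measurable_const (hFm n).norm), integral_const,
      smul_eq_mul, mul_one, measureReal_restrict_apply_univ] at h1
  have hPne : P {ω | (K : ℝ) + 1 ≤ ‖F n ω‖} ≠ ⊤ := measure_ne_top _ _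
  calc P {ω | (K : ℝ) + 1 ≤ ‖F n ω‖}
      = ENNReal.ofReal (P {ω | (K : ℝ) + 1 ≤ ‖F n ω‖}).toReal := (ENNReal.ofReal_toReal hPne).symm
    _ ≤ ENNReal.ofReal (∫ ω, g (F n ω) ∂P) := ENNReal.ofReal_le_ofReal hsub
    _ ≤ ENNReal.ofReal η := ENNReal.ofReal_le_ofReal (by linarith)

/-- Slutsky-type lemma (Lemma 2, product form): if `cₙ(xₙ − x₀)` converges in
distribution to a centered Gaussian vector with covariance `Σ₁`, `dₙ(yₙ − y₀)`
converges in distribution to a centered normal with variance `σ₂²`, `cₙ/dₙ → 0`,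
`dₙ → ∞`, and `yₙ, y₀` are bounded away from zero, then
`cₙ(xₙ·yₙ − x₀·y₀) − cₙ(xₙ − x₀)·y₀` converges to `0` in probability. -/
theorem stmt_6 {Ω : Type*} [MeasurableSpace Ω] (P : Measure Ω) [IsProbabilityMeasure P]
    (p : ℕ) (x : ℕ → Ω → Fin p → ℝ) (x₀ : Fin p → ℝ)
    (y : ℕ → Ω → ℝ) (y₀ : ℝ)
    (hxm : ∀ n, Measurable (x n)) (hym : ∀ n, Measurable (y n))
    (c d : ℕ → ℝ) (hc : ∀ n, 0 < c n) (hd : ∀ n, 0 < d n)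
    (hcd : Tendsto (fun n => c n / d n) atTop (𝓝 0))
    (hdtop : Tendsto d atTop atTop)
    (S₁ : Matrix (Fin p) (Fin p) ℝ) (σ₂sq : NNReal)
    (μ₁ : Measure (Fin p → ℝ)) [IsProbabilityMeasure μ₁]
    (hμ₁ : ∀ v : Fin p → ℝ,
      μ₁.map (fun z => v ⬝ᵥ z) = gaussianReal 0 (Real.toNNReal (v ⬝ᵥ S₁ *ᵥ v)))
    (hxconv : ∀ f : BoundedContinuousFunction (Fin p → ℝ) ℝ,
      Tendsto (fun n => ∫ ω, f (c n • (x n ω - x₀)) ∂P) atTop (𝓝 (∫ z, f z ∂μ₁)))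
    (hyconv : ∀ f : BoundedContinuousFunction ℝ ℝ,
      Tendsto (fun n => ∫ ω, f (d n * (y n ω - y₀)) ∂P) atTop
        (𝓝 (∫ z, f z ∂(gaussianReal 0 σ₂sq))))
    (ε : ℝ) (hε : 0 < ε) (hyn : ∀ n, ∀ᵐ ω ∂P, ε ≤ |y n ω|) (hy₀ : ε ≤ |y₀|) :
    TendstoInMeasure P
      (fun n ω => c n • ((y n ω) • x n ω - y₀ • x₀) - y₀ • (c n • (x n ω - x₀)))
      atTop (fun _ => (0 : Fin p → ℝ)) := by
  set W : ℕ → Ω → ℝ := fun n ω => d n * (y n ω - y₀) with hWdef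
  set V : ℕ → Ω → Fin p → ℝ := fun n ω => c n • (x n ω - x₀) with hVdef
  have hWm : ∀ n, Measurable (W n) := fun n =>
    ((hym n).sub measurable_const).const_mul (d n)
  have hVm : ∀ n, Measurable (V n) := fun n =>
    (((hxm n).sub measurable_const).const_smul (c n))
  -- algebraic identity
  have hZeq : ∀ n ω, (c n • ((y n ω) • x n ω - y₀ • x₀) - y₀ • (c n • (x n ω - x₀)))
      = ((c n / d n) * W n ω) • x₀ + ((d n)⁻¹ * W n ω) • V n ω := by
    intro n ω
    funext i
    have hdn : d n ≠ 0 := (hd n).ne'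
    simp only [hWdef, hVdef, Pi.add_apply, Pi.sub_apply, Pi.smul_apply, smul_eq_mul]
    field_simp
    ring
  have hnorm : ∀ n ω,
      ‖(c n • ((y n ω) • x n ω - y₀ • x₀) - y₀ • (c n • (x n ω - x₀)))‖
        ≤ (c n / d n) * |W n ω| * ‖x₀‖ + (d n)⁻¹ * |W n ω| * ‖V n ω‖ := by
    intro n ω
    rw [hZeq n ω]
    refine le_trans (norm_add_le _ _) ?_
    rw [norm_smul, norm_smul]
    have h1 : ‖(c n / d n) * W n ω‖ = (c n / d n) * |W n ω| := by
      rw [norm_mul, Real.norm_eq_abs, Real.norm_eq_abs,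
        abs_of_pos (div_pos (hc n) (hd n))]
    have h2 : ‖(d n)⁻¹ * W n ω‖ = (d n)⁻¹ * |W n ω| := by
      rw [norm_mul, Real.norm_eq_abs, Real.norm_eq_abs, abs_of_pos (inv_pos.mpr (hd n))]
    rw [h1, h2]
  rw [tendstoInMeasure_iff_dist]
  intro δ hδ
  rw [ENNReal.tendsto_nhds_zero]
  intro εE hεE
  obtain ⟨η, hη, hηle⟩ : ∃ η : ℝ, 0 < η ∧ ENNReal.ofReal η ≤ εE := by
    rcases eq_or_ne εE ⊤ with h | h
    · exact ⟨1, one_pos, by simp [h]⟩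
    · exact ⟨εE.toReal, ENNReal.toReal_pos hεE.ne' h, by rw [ENNReal.ofReal_toReal h]⟩
  obtain ⟨M₁, hM₁pos, hM₁⟩ := tail_bound P W hWm (gaussianReal 0 σ₂sq) hyconv (η/2) (by linarith)
  obtain ⟨M₂, hM₂pos, hM₂⟩ := tail_bound P V hVm μ₁ hxconv (η/2) (by linarith)
  have h1d : Tendsto (fun n => (d n)⁻¹) atTop (𝓝 0) := hdtop.inv_tendsto_atTop
  have hcoef : Tendsto (fun n => (c n / d n) * M₁ * ‖x₀‖ + (d n)⁻¹ * M₁ * M₂) atTop (𝓝 0) := by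
    have ha := (hcd.mul_const M₁).mul_const ‖x₀‖
    have hb := (h1d.mul_const M₁).mul_const M₂
    simpa using ha.add hb
  have hev : ∀ᶠ n in atTop, (c n / d n) * M₁ * ‖x₀‖ + (d n)⁻¹ * M₁ * M₂ < δ :=
    hcoef.eventually_lt_const hδ
  filter_upwards [hM₁, hM₂, hev] with n h1 h2 h3
  have hsub : {ω | δ ≤ dist ((c n • ((y n ω) • x n ω - y₀ • x₀) - y₀ • (c n • (x n ω - x₀))))
        ((fun _ => (0:ℝ)) : Fin p → ℝ)}
      ⊆ {ω | M₁ ≤ ‖W n ω‖} ∪ {ω | M₂ ≤ ‖V n ω‖} := by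
    intro ω hω
    simp only [Set.mem_setOf_eq] at hω
    by_contra hcon
    simp only [Set.mem_union, Set.mem_setOf_eq, not_or, not_le] at hcon
    obtain ⟨hw, hv⟩ := hcon
    rw [Real.norm_eq_abs] at hw
    have hb := hnorm n ω
    have hdist : dist ((c n • ((y n ω) • x n ω - y₀ • x₀) - y₀ • (c n • (x n ω - x₀))))
        ((fun _ => (0:ℝ)) : Fin p → ℝ)
        = ‖(c n • ((y n ω) • x n ω - y₀ • x₀) - y₀ • (c n • (x n ω - x₀)))‖ := by
      have : ((fun _ => (0:ℝ)) : Fin p → ℝ) = 0 := rfl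
      rw [this, dist_zero_right]
    rw [hdist] at hω
    have hle2 : (c n / d n) * |W n ω| * ‖x₀‖ + (d n)⁻¹ * |W n ω| * ‖V n ω‖
        ≤ (c n / d n) * M₁ * ‖x₀‖ + (d n)⁻¹ * M₁ * M₂ := by
      have hcd0 : 0 ≤ c n / d n := le_of_lt (div_pos (hc n) (hd n))
      have hd0 : 0 ≤ (d n)⁻¹ := le_of_lt (inv_pos.mpr (hd n))
      have hW0 : 0 ≤ |W n ω| := abs_nonneg _
      gcongr <;> first | exact hw.le | exact hv.le
    linarith
  calc P {ω | δ ≤ dist ((c n • ((y n ω) • x n ω - y₀ • x₀) - y₀ • (c n • (x n ω - x₀))))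
        ((fun _ => (0:ℝ)) : Fin p → ℝ)}
      ≤ P ({ω | M₁ ≤ ‖W n ω‖} ∪ {ω | M₂ ≤ ‖V n ω‖}) := measure_mono hsub
    _ ≤ P {ω | M₁ ≤ ‖W n ω‖} + P {ω | M₂ ≤ ‖V n ω‖} := measure_union_le _ _
    _ ≤ ENNReal.ofReal (η/2) + ENNReal.ofReal (η/2) := add_le_add h1 h2
    _ = ENNReal.ofReal η := by rw [← ENNReal.ofReal_add (by linarith) (by linarith)]; norm_num
    _ ≤ εE := hηle
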